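/- arXiv:0908.2236 — 5 statements merged into one kernel-verified Lean document; each statement's English description precedes it below -/
import Mathlib

section
/- For any solution x of the Lane–Emden equation ẍ = -(2/t)ẋ - x^5 on (0,∞), the quantity I(t) = (4t³ x(t)⁶)/3 + 4t³ ẋ(t)² + 4t² x(t) ẋ(t) is constant, i.e. its time derivative vanishes. -/
/-- For any solution `x` of the Lane–Emden equation `ẍ = -(2/t)ẋ - x^5` on `(0,∞)`,
the quantity `I(t) = (4/3)t³x⁶ + 4t³ẋ² + 4t²xẋ` is constant: its derivative vanishes. -/
theorem laneEmden_constant_of_motion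
    (x : ℝ → ℝ)
    (hx : ∀ t : ℝ, 0 < t →
      DifferentiableAt ℝ x t ∧ DifferentiableAt ℝ (deriv x) t ∧
      deriv (deriv x) t = -(2 / t) * deriv x t - x t ^ 5) :
    ∀ t : ℝ, 0 < t →
      deriv (fun s => (4 / 3) * s ^ 3 * x s ^ 6 + 4 * s ^ 3 * (deriv x s) ^ 2
        + 4 * s ^ 2 * x s * deriv x s) t = 0 := by
  intro t ht
  obtain ⟨h1, h2, heq⟩ := hx t ht
  have ht0 : t ≠ 0 := ne_of_gt ht
  have hx1 : HasDerivAt x (deriv x t) t := h1.hasDerivAt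
  have hx2 : HasDerivAt (deriv x) (deriv (deriv x) t) t := h2.hasDerivAt
  have hid : HasDerivAt (fun s : ℝ => s) 1 t := hasDerivAt_id t
  have hpow3 : HasDerivAt (fun s : ℝ => s ^ 3) (3 * t ^ 2) t := by
    simpa using (hasDerivAt_pow 3 t)
  have hpow2 : HasDerivAt (fun s : ℝ => s ^ 2) (2 * t) t := by
    simpa using (hasDerivAt_pow 2 t)
  have hA : HasDerivAt (fun s => (4 / 3 : ℝ) * s ^ 3 * x s ^ 6)
      ((4 / 3) * (3 * t ^ 2) * x t ^ 6
        + (4 / 3) * t ^ 3 * (6 * x t ^ 5 * deriv x t)) t := by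
    have hx6 : HasDerivAt (fun s => x s ^ 6) (6 * x t ^ 5 * deriv x t) t := by
      simpa [mul_comm, mul_assoc] using (hx1.fun_pow 6)
    have := ((hpow3.const_mul (4 / 3 : ℝ)).fun_mul hx6)
    simpa [mul_comm, mul_assoc, mul_left_comm] using this
  have hB : HasDerivAt (fun s => (4 : ℝ) * s ^ 3 * (deriv x s) ^ 2)
      (4 * (3 * t ^ 2) * (deriv x t) ^ 2
        + 4 * t ^ 3 * (2 * deriv x t * deriv (deriv x) t)) t := by
    have hd2 : HasDerivAt (fun s => (deriv x s) ^ 2)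
        (2 * deriv x t * deriv (deriv x) t) t := by
      simpa [mul_comm, mul_assoc] using (hx2.fun_pow 2)
    have := ((hpow3.const_mul (4 : ℝ)).fun_mul hd2)
    simpa [mul_comm, mul_assoc, mul_left_comm] using this
  have hC : HasDerivAt (fun s => (4 : ℝ) * s ^ 2 * x s * deriv x s)
      ((4 * (2 * t) * x t + 4 * t ^ 2 * deriv x t) * deriv x t
        + 4 * t ^ 2 * x t * deriv (deriv x) t) t := by
    have := (((hpow2.const_mul (4 : ℝ)).fun_mul hx1).fun_mul hx2)
    simpa [mul_comm, mul_assoc, mul_left_comm] using this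
  have hI := (hA.fun_add hB).fun_add hC
  rw [hI.deriv]
  rw [heq]
  field_simp
  ring
end

section
/- For any solution x of ẍ = -(5/(t+K))ẋ - x² on (−K, ∞), the quantity I(t) = (1/3)x³(t+K)⁶ + (1/2)ẋ²(t+K)⁶ + 2xẋ(t+K)⁵ is constant in t. -/
/-- For any solution `x` of `ẍ = -(5/(t+K))ẋ - x²` on `(-K,∞)`, the quantity
`I(t) = (1/3)x³(t+K)⁶ + (1/2)ẋ²(t+K)⁶ + 2xẋ(t+K)⁵` is constant in `t`. -/
theorem emden_constant_of_motion_n2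
    (K : ℝ) (x : ℝ → ℝ)
    (hx : ∀ t : ℝ, -K < t →
      DifferentiableAt ℝ x t ∧ DifferentiableAt ℝ (deriv x) t ∧
      deriv (deriv x) t = -(5 / (t + K)) * deriv x t - x t ^ 2) :
    ∀ t : ℝ, -K < t →
      deriv (fun s => (1 / 3) * x s ^ 3 * (s + K) ^ 6
        + (1 / 2) * (deriv x s) ^ 2 * (s + K) ^ 6
        + 2 * x s * deriv x s * (s + K) ^ 5) t = 0 := by
  intro t ht
  obtain ⟨h1, h2, h3⟩ := hx t ht
  have hK : t + K ≠ 0 := by linarith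
  set u := x t with hu
  set v := deriv x t with hv
  set a := deriv (deriv x) t with ha
  have hxd : HasDerivAt x v t := h1.hasDerivAt
  have hxdd : HasDerivAt (deriv x) a t := h2.hasDerivAt
  have hid : HasDerivAt (fun s : ℝ => s + K) 1 t := (hasDerivAt_id t).add_const K
  have hI : HasDerivAt (fun s => (1 / 3) * x s ^ 3 * (s + K) ^ 6
        + (1 / 2) * (deriv x s) ^ 2 * (s + K) ^ 6
        + 2 * x s * deriv x s * (s + K) ^ 5)
      (((1/3 : ℝ) * (3 * u ^ 2 * v) * (t + K) ^ 6
          + (1/3) * u ^ 3 * (6 * (t + K) ^ 5 * 1))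
        + ((1/2 : ℝ) * (2 * v ^ 1 * a) * (t + K) ^ 6
          + (1/2) * v ^ 2 * (6 * (t + K) ^ 5 * 1))
        + ((2 * v * v + 2 * u * a) * (t + K) ^ 5
          + 2 * u * v * (5 * (t + K) ^ 4 * 1))) t := by
    have p1 : HasDerivAt (fun s => (1/3 : ℝ) * x s ^ 3 * (s + K) ^ 6)
        ((1/3 : ℝ) * (3 * u ^ 2 * v) * (t + K) ^ 6
          + (1/3) * u ^ 3 * (6 * (t + K) ^ 5 * 1)) t := by
      have := ((hxd.pow 3).const_mul (1/3 : ℝ)).mul (hid.pow 6)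
      exact this.congr_deriv (by simp only [Pi.pow_apply, Pi.mul_apply, ← hu, ← hv]; push_cast; ring_nf)
    have p2 : HasDerivAt (fun s => (1/2 : ℝ) * (deriv x s) ^ 2 * (s + K) ^ 6)
        ((1/2 : ℝ) * (2 * v ^ 1 * a) * (t + K) ^ 6
          + (1/2) * v ^ 2 * (6 * (t + K) ^ 5 * 1)) t := by
      have := ((hxdd.pow 2).const_mul (1/2 : ℝ)).mul (hid.pow 6)
      exact this.congr_deriv (by simp only [Pi.pow_apply, Pi.mul_apply, ← hu, ← hv]; push_cast; ring_nf)
    have p3 : HasDerivAt (fun s => 2 * x s * deriv x s * (s + K) ^ 5)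
        ((2 * v * v + 2 * u * a) * (t + K) ^ 5
          + 2 * u * v * (5 * (t + K) ^ 4 * 1)) t := by
      have := (((hxd.const_mul (2 : ℝ)).mul hxdd)).mul (hid.pow 5)
      exact this.congr_deriv (by simp only [Pi.pow_apply, Pi.mul_apply, ← hu, ← hv]; push_cast; ring_nf)
    exact (p1.add p2).add p3
  rw [hI.deriv, h3]
  field_simp
  ring
end

section
/- For any solution x of ẍ = -(3/(2(t+K)))ẋ - x^9 on (−K,∞), the function I(t) = (K+t)^{3/2}·(10(K+t)ẋ² + 5ẋx + 2(K+t)x^{10}) is constant in t. -/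
/-- For any solution `x` of `ẍ = -(3/(2(t+K)))ẋ - x⁹` on `(-K,∞)`, the function
`I(t) = (K+t)^{3/2}(10(K+t)ẋ² + 5ẋx + 2(K+t)x^{10})` is constant in `t`. -/
theorem emden_constant_of_motion_n9
    (K : ℝ) (x : ℝ → ℝ)
    (hx : ∀ t : ℝ, -K < t →
      DifferentiableAt ℝ x t ∧ DifferentiableAt ℝ (deriv x) t ∧
      deriv (deriv x) t = -(3 / (2 * (t + K))) * deriv x t - x t ^ 9) :
    ∀ t : ℝ, -K < t →
      deriv (fun s => (K + s) ^ ((3 : ℝ) / 2) *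
        (10 * (K + s) * (deriv x s) ^ 2 + 5 * deriv x s * x s
          + 2 * (K + s) * x s ^ 10)) t = 0 := by
  intro t ht
  have hu : (0:ℝ) < K + t := by linarith
  obtain ⟨hdx, hdx', hode⟩ := hx t ht
  have hx1 : HasDerivAt x (deriv x t) t := hdx.hasDerivAt
  have hx2 : HasDerivAt (deriv x) (deriv (deriv x) t) t := hdx'.hasDerivAt
  have hK : HasDerivAt (fun s => K + s) 1 t := by
    simpa using (hasDerivAt_id t).const_add K
  have hpow : HasDerivAt (fun s => (K + s) ^ ((3:ℝ)/2))
      ((3/2) * (K + t) ^ ((1:ℝ)/2)) t := by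
    have h := (Real.hasDerivAt_rpow_const (x := K + t) (p := (3:ℝ)/2)
      (Or.inl hu.ne')).comp t hK
    refine h.congr_deriv ?_
    norm_num
  have hg : HasDerivAt (fun s => 10 * (K + s) * (deriv x s) ^ 2
      + 5 * deriv x s * x s + 2 * (K + s) * x s ^ 10)
      (((10 * 1) * (deriv x t) ^ 2 + (10 * (K + t)) * ((2:ℕ) * (deriv x t) ^ (2-1) * deriv (deriv x) t)
       + ((5 * deriv (deriv x) t) * x t + (5 * deriv x t) * deriv x t))
       + ((2 * 1) * x t ^ 10 + (2 * (K + t)) * ((10:ℕ) * x t ^ (10-1) * deriv x t))) t := by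
    exact (((hK.const_mul 10).mul (hx2.pow 2)).add
      ((hx2.const_mul 5).mul hx1)).add
      ((hK.const_mul 2).mul (hx1.pow 10))
  have H : HasDerivAt (fun s => (K + s) ^ ((3:ℝ)/2) * (10 * (K + s) * (deriv x s) ^ 2 + 5 * deriv x s * x s + 2 * (K + s) * x s ^ 10)) _ t := hpow.mul hg
  rw [H.deriv, hode]
  have h32 : (K + t) ^ ((3:ℝ)/2) = (K + t) * (K + t) ^ ((1:ℝ)/2) := by
    rw [show (3:ℝ)/2 = 1 + 1/2 by norm_num, Real.rpow_add hu, Real.rpow_one]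
  rw [h32]
  have h2 : (2:ℝ) * (t + K) ≠ 0 := ne_of_gt (by linarith)
  rw [add_comm t K]
  field_simp [hu.ne']
  ring
end

section
/- For any solution x of ẍ = -(5/(3(t+K)))ẋ - x^7 on (−K,∞), the function I(t) = (K+t)^{5/3}·(12(K+t)ẋ² + 8ẋx + 3x^8(K+t)) is constant in t. -/
/-- For any solution `x` of `ẍ = -(5/(3(t+K)))ẋ - x⁷` on `(-K,∞)`, the function
`I(t) = (K+t)^{5/3}(12(K+t)ẋ² + 8ẋx + 3x⁸(K+t))` is constant in `t`. -/
theorem emden_constant_of_motion_n7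
    (K : ℝ) (x : ℝ → ℝ)
    (hx : ∀ t : ℝ, -K < t →
      DifferentiableAt ℝ x t ∧ DifferentiableAt ℝ (deriv x) t ∧
      deriv (deriv x) t = -(5 / (3 * (t + K))) * deriv x t - x t ^ 7) :
    ∀ t : ℝ, -K < t →
      deriv (fun s => (K + s) ^ ((5 : ℝ) / 3) *
        (12 * (K + s) * (deriv x s) ^ 2 + 8 * deriv x s * x s
          + 3 * x s ^ 8 * (K + s))) t = 0 := by
  intro t ht
  have hpos : (0 : ℝ) < K + t := by linarith
  obtain ⟨hx1, hx2, hode⟩ := hx t ht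
  have hv : HasDerivAt x (deriv x t) t := hx1.hasDerivAt
  have ha : HasDerivAt (deriv x) (deriv (deriv x) t) t := hx2.hasDerivAt
  set u := x t with hu
  set v := deriv x t with hvv
  set a := deriv (deriv x) t with haa
  have hlin : HasDerivAt (fun s : ℝ => K + s) 1 t := (hasDerivAt_id t).const_add K
  have hpow : HasDerivAt (fun s : ℝ => (K + s) ^ ((5 : ℝ) / 3))
      (5 / 3 * (K + t) ^ ((5 : ℝ) / 3 - 1) * 1) t := by
    exact (Real.hasDerivAt_rpow_const (Or.inl (ne_of_gt hpos))).comp t hlin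
  have hg : HasDerivAt (fun s => 12 * (K + s) * (deriv x s) ^ 2 + 8 * deriv x s * x s
      + 3 * x s ^ 8 * (K + s))
      ((12 * 1 * v ^ 2 + 12 * (K + t) * (2 * v ^ 1 * a)) + (8 * a * u + 8 * v * v)
        + (3 * (8 * u ^ 7 * v) * (K + t) + 3 * u ^ 8 * 1)) t := by
    have h1 : HasDerivAt (fun s => 12 * (K + s) * (deriv x s) ^ 2)
        (12 * 1 * v ^ 2 + 12 * (K + t) * (2 * v ^ 1 * a)) t :=
      ((hlin.const_mul 12).mul (ha.pow 2))
    have h2 : HasDerivAt (fun s => 8 * deriv x s * x s) (8 * a * u + 8 * v * v) t :=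
      (ha.const_mul 8).mul hv
    have h3 : HasDerivAt (fun s => 3 * x s ^ 8 * (K + s))
        (3 * (8 * u ^ 7 * v) * (K + t) + 3 * u ^ 8 * 1) t := by
      have := ((hv.pow 8).const_mul 3).mul hlin
      simpa [Pi.mul_def] using this
    simpa [Pi.add_def] using (h1.add h2).add h3
  have hI := hpow.mul hg
  simp only [Pi.mul_def] at hI
  rw [hI.deriv]
  have hsplit : (K + t) ^ ((5 : ℝ) / 3) = (K + t) ^ ((5 : ℝ) / 3 - 1) * (K + t) := by
    rw [Real.rpow_sub_one hpos.ne', div_mul_cancel₀]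
    exact hpos.ne'
  have hne : t + K ≠ 0 := by linarith
  rw [hsplit, hode]
  field_simp
  ring
end

section
/- Suppose a,b : ℝ → ℝ are continuous and b(t)·exp(-2∫₀ᵗ a) = K for a constant K. Then for any solution x of ẍ = a(t)ẋ + b(t)xⁿ (n ∈ ℕ, n ≥ 2), the quantity I(t) = exp(-2∫₀ᵗ a)·( ẋ²/2 - b(t)x^{n+1}/(n+1) ) is constant. -/
/-- Suppose `a, b : ℝ → ℝ` are continuous and `b(t)·exp(-2∫₀ᵗ a) = K` for a constant
`K`. Then for any solution `x` of `ẍ = a(t)ẋ + b(t)xⁿ` (`n ∈ ℕ`, `n ≥ 2`), the quantity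
`I(t) = exp(-2∫₀ᵗ a)(ẋ²/2 - b(t)x^{n+1}/(n+1))` is constant. -/
theorem emden_dissipative_constant_of_motion
    (n : ℕ) (hn : 2 ≤ n) (K : ℝ) (a b : ℝ → ℝ)
    (ha : Continuous a) (hb : Continuous b)
    (hbK : ∀ t : ℝ, b t = K * Real.exp (2 * ∫ s in (0 : ℝ)..t, a s))
    (x : ℝ → ℝ)
    (hx : ∀ t : ℝ,
      DifferentiableAt ℝ x t ∧ DifferentiableAt ℝ (deriv x) t ∧
      deriv (deriv x) t = a t * deriv x t + b t * x t ^ n) :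
    ∀ t : ℝ,
      deriv (fun s => Real.exp (-2 * ∫ u in (0 : ℝ)..s, a u) *
        ((deriv x s) ^ 2 / 2 - b s * x s ^ (n + 1) / (n + 1 : ℝ))) t = 0 := by
  intro t
  set A : ℝ → ℝ := fun s => ∫ u in (0 : ℝ)..s, a u with hA
  -- rewrite the function
  have hfun : (fun s => Real.exp (-2 * ∫ u in (0 : ℝ)..s, a u) *
        ((deriv x s) ^ 2 / 2 - b s * x s ^ (n + 1) / (n + 1 : ℝ)))
      = (fun s => Real.exp (-2 * A s) * ((deriv x s) ^ 2 / 2)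
          - K * x s ^ (n + 1) / (n + 1 : ℝ)) := by
    funext s
    rw [hbK s]
    have : Real.exp (-2 * A s) * Real.exp (2 * A s) = 1 := by
      rw [← Real.exp_add]; ring_nf; exact Real.exp_zero
    linear_combination (-(K * x s ^ (n+1) / ((n:ℝ)+1))) * this
  rw [hfun]
  have hAd : HasDerivAt A (a t) t :=
    intervalIntegral.integral_hasDerivAt_right (ha.intervalIntegrable _ _)
      (ha.stronglyMeasurableAtFilter _ _) ha.continuousAt
  obtain ⟨hx1, hx2, hx3⟩ := hx t
  have hE : HasDerivAt (fun s => Real.exp (-2 * A s))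
      (Real.exp (-2 * A t) * (-2 * a t)) t := by
    have := ((hAd.const_mul (-2)).exp)
    simpa [mul_comm] using this
  have hv : HasDerivAt (deriv x) (deriv (deriv x) t) t := hx2.hasDerivAt
  have hv2 : HasDerivAt (fun s => (deriv x s) ^ 2 / 2)
      (deriv x t * deriv (deriv x) t) t := by
    have := (hv.fun_pow 2).div_const 2
    refine this.congr_deriv ?_
    ring
  have hxd : HasDerivAt x (deriv x t) t := hx1.hasDerivAt
  have hxp : HasDerivAt (fun s => K * x s ^ (n + 1) / (n + 1 : ℝ))
      (K * ((n + 1 : ℝ) * x t ^ n * deriv x t) / (n + 1 : ℝ)) t := by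
    have := ((hxd.pow (n + 1)).const_mul K).div_const (n + 1 : ℝ)
    simpa [mul_comm, mul_assoc, Nat.add_sub_cancel] using this
  have hI : HasDerivAt (fun s => Real.exp (-2 * A s) * ((deriv x s) ^ 2 / 2)
        - K * x s ^ (n + 1) / (n + 1 : ℝ))
      (Real.exp (-2 * A t) * (-2 * a t) * ((deriv x t) ^ 2 / 2)
        + Real.exp (-2 * A t) * (deriv x t * deriv (deriv x) t)
        - K * ((n + 1 : ℝ) * x t ^ n * deriv x t) / (n + 1 : ℝ)) t :=
    (hE.mul hv2).sub hxp
  rw [hI.deriv]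
  have hK : Real.exp (-2 * A t) * b t = K := by
    rw [hbK t]
    have : Real.exp (-2 * A t) * Real.exp (2 * A t) = 1 := by
      rw [← Real.exp_add]; ring_nf; exact Real.exp_zero
    linear_combination K * this
  have hn1 : (n + 1 : ℝ) ≠ 0 := by positivity
  rw [hx3]
  field_simp
  ring_nf at hK ⊢
  linear_combination (x t ^ n * deriv x t) * hK
end
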